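/- $QA_{\varphi,\psi}$ is complete: if $\{f_n\}_{n=1}^\infty\subset QA_{\varphi,\psi}$ is a Cauchy sequence with respect to the quasi-norm $\|\cdot\|_{\varphi,\psi}$, then there exists $f\in QA_{\varphi,\psi}$ such that $\|f_n-f\|_{\varphi,\psi}\to 0$ as $n\to\infty$. -/

import Mathlib

open MeasureTheory ENNReal Set Filter Topology

noncomputable section

/-- Lebesgue measure restricted to the interval `[0,1]`. -/
def μ01 : Measure ℝ := volume.restrict (Set.Icc 0 1)

/-- `φ : [0,1] → [0,∞)` is concave, non-decreasing, and vanishes only at the origin. -/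
structure IsPhi (φ : ℝ → ℝ) : Prop where
  concave : ConcaveOn ℝ (Set.Icc 0 1) φ
  mono : MonotoneOn φ (Set.Icc 0 1)
  zero : φ 0 = 0
  pos : ∀ t : ℝ, 0 < t → t ≤ 1 → 0 < φ t

/-- `ψ : [0,∞) → [0,∞)` is concave, non-decreasing, and vanishes only at the origin. -/
structure IsPsi (ψ : ℝ → ℝ) : Prop where
  concave : ConcaveOn ℝ (Set.Ici 0) ψ
  mono : MonotoneOn ψ (Set.Ici 0)
  zero : ψ 0 = 0
  pos : ∀ t : ℝ, 0 < t → 0 < ψ t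

/-- A sequence `g` of nonnegative `L^∞` functions with `|f| ≤ ∑ₙ gₙ` a.e. -/
def Admissible (f : ℝ → ℝ) (g : ℕ → ℝ → ℝ) : Prop :=
  (∀ n, AEMeasurable (g n) μ01) ∧
  (∀ n, eLpNorm (g n) ⊤ μ01 < ⊤) ∧
  (∀ n x, 0 ≤ g n x) ∧
  (∀ᵐ x ∂μ01, ENNReal.ofReal |f x| ≤ ∑' n : ℕ, ENNReal.ofReal (g n x))

/-- The cost `∑ₙ ψ(n) ‖gₙ‖_∞ φ(‖gₙ‖₁/‖gₙ‖_∞)` of a decomposition (index shifted by 1;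
`0/0 = 0` by the `ℝ≥0∞` division convention, and `φ 0 = 0`). -/
def seqCost (φ ψ : ℝ → ℝ) (g : ℕ → ℝ → ℝ) : ℝ≥0∞ :=
  ∑' n : ℕ, ENNReal.ofReal
    (ψ ((n : ℝ) + 1) * (eLpNorm (g n) ⊤ μ01).toReal *
      φ ((eLpNorm (g n) 1 μ01 / eLpNorm (g n) ⊤ μ01).toReal))

/-- The quasi-norm `‖f‖_{φ,ψ}` (equal to `∞` when no admissible decomposition exists). -/
def QANorm (φ ψ : ℝ → ℝ) (f : ℝ → ℝ) : ℝ≥0∞ :=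
  ⨅ (g : ℕ → ℝ → ℝ) (_ : Admissible f g), seqCost φ ψ g

/-- Membership in the space `QA_{φ,ψ}`. -/
def MemQA (φ ψ : ℝ → ℝ) (f : ℝ → ℝ) : Prop :=
  AEMeasurable f μ01 ∧ QANorm φ ψ f < ⊤

/-- The decreasing rearrangement `f*` of `f` on `[0,1]`. -/
def decRearr (f : ℝ → ℝ) (t : ℝ) : ℝ :=
  sInf {s : ℝ | 0 ≤ s ∧ μ01 {x | s < |f x|} ≤ ENNReal.ofReal t}

/-- The limit `ζ(0⁺)` of a non-decreasing function `ζ` on `[0,1]`. -/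
def limZero (ζ : ℝ → ℝ) : ℝ := sInf (ζ '' Set.Ioc 0 1)

/-- The Lorentz norm `‖f‖_{Λ_ζ} = ∫₀¹ f* dζ = ‖f‖_∞ ζ(0⁺) + ∫₀¹ f*(s) ζ'(s) ds`
(for `ζ` concave the derivative exists a.e. and `ζ` is absolutely continuous on `(0,1]`). -/
def lorentzNorm (ζ : ℝ → ℝ) (f : ℝ → ℝ) : ℝ≥0∞ :=
  eLpNorm f ⊤ μ01 * ENNReal.ofReal (limZero ζ) +
    ∫⁻ s in Set.Ioc (0:ℝ) 1, ENNReal.ofReal (decRearr f s * deriv ζ s)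

/-- Membership in the Lorentz space `Λ_ζ`. -/
def MemLorentz (ζ : ℝ → ℝ) (f : ℝ → ℝ) : Prop :=
  AEMeasurable f μ01 ∧ lorentzNorm ζ f < ⊤

/-- The quasi-concave function `φ_s(t) = inf_n max{sₙ,t} (φ(sₙ)/sₙ) ψ(n)` (index shifted by 1). -/
def phiSeq (φ ψ : ℝ → ℝ) (s : ℕ → ℝ) (t : ℝ) : ℝ :=
  if t = 0 then 0 else ⨅ n : ℕ, max (s n) t * (φ (s n) / s n) * ψ ((n : ℝ) + 1)

/-- The function `τ(t) = φ(t) ψ(logbar(φ(t)/t))` with `logbar t = 1 + log⁺ t`. -/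
def tauF (φ ψ : ℝ → ℝ) (t : ℝ) : ℝ :=
  if t = 0 then 0 else φ t * ψ (1 + max (Real.log (φ t / t)) 0)


section Helpers

variable {φ ψ : ℝ → ℝ}

lemma psi_nonneg (hψ : IsPsi ψ) {t : ℝ} (ht : 0 ≤ t) : 0 ≤ ψ t := by
  rw [← hψ.zero]
  exact hψ.mono (mem_Ici.2 le_rfl) (mem_Ici.2 ht) ht

lemma psi_scale (hψ : IsPsi ψ) {c t : ℝ} (hc : 1 ≤ c) (ht : 0 ≤ t) :
    ψ (c * t) ≤ c * ψ t := by
  have hc0 : 0 < c := one_pos.trans_le hc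
  have ha : (0:ℝ) ≤ 1/c := by positivity
  have hb : (0:ℝ) ≤ 1 - 1/c := by
    have : 1/c ≤ 1 := by rw [div_le_one hc0]; exact hc
    linarith
  have hab : 1/c + (1 - 1/c) = 1 := by ring
  have h := hψ.concave.2 (show c*t ∈ Ici (0:ℝ) from mem_Ici.2 (by positivity))
    (show (0:ℝ) ∈ Ici (0:ℝ) from mem_Ici.2 le_rfl) ha hb hab
  simp only [smul_eq_mul, hψ.zero, mul_zero, add_zero] at h
  rw [show (1/c) * (c*t) = t by field_simp] at h
  calc ψ (c*t) = c * (1/c * ψ (c*t)) := by field_simp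
    _ ≤ c * ψ t := mul_le_mul_of_nonneg_left h hc0.le

lemma phi_lower (hφ : IsPhi φ) {r : ℝ} (h0 : 0 ≤ r) (h1 : r ≤ 1) : r * φ 1 ≤ φ r := by
  have h := hφ.concave.2 (show (1:ℝ) ∈ Icc (0:ℝ) 1 from mem_Icc.2 ⟨zero_le_one, le_rfl⟩)
    (show (0:ℝ) ∈ Icc (0:ℝ) 1 from mem_Icc.2 ⟨le_rfl, zero_le_one⟩)
    h0 (show (0:ℝ) ≤ 1 - r by linarith) (show r + (1-r) = 1 by ring)
  simpa [smul_eq_mul, hφ.zero] using h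

lemma phi_nonneg (hφ : IsPhi φ) {r : ℝ} (h0 : 0 ≤ r) (h1 : r ≤ 1) : 0 ≤ φ r :=
  le_trans (mul_nonneg h0 (hφ.pos 1 one_pos le_rfl).le) (phi_lower hφ h0 h1)

lemma two_pow_odd_inj : ∀ k j n m : ℕ, 2^k * (2*n+1) = 2^j * (2*m+1) → k = j ∧ n = m := by
  intro k
  induction k with
  | zero =>
    intro j n m h
    cases j with
    | zero => simp at h; omega
    | succ j =>
      have hd : 2 ∣ 2^(j+1) * (2*m+1) :=
        Dvd.dvd.mul_right (dvd_pow_self 2 (Nat.succ_ne_zero j)) _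
      rw [← h] at hd
      simp at hd
  | succ k ih =>
    intro j n m h
    cases j with
    | zero =>
      have hd : 2 ∣ 2^(k+1) * (2*n+1) :=
        Dvd.dvd.mul_right (dvd_pow_self 2 (Nat.succ_ne_zero k)) _
      rw [h] at hd
      simp at hd
    | succ j =>
      rw [pow_succ', pow_succ', mul_assoc, mul_assoc] at h
      have h' := Nat.eq_of_mul_eq_mul_left two_pos h
      obtain ⟨h1, h2⟩ := ih j n m h'
      omega

instance : IsProbabilityMeasure μ01 := by
  constructor
  rw [μ01, Measure.restrict_apply_univ, Real.volume_Icc]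
  norm_num

lemma eLpNorm_one_eq (u : ℝ → ℝ) : eLpNorm u 1 μ01 = ∫⁻ x, ENNReal.ofReal |u x| ∂μ01 := by
  rw [eLpNorm_one_eq_lintegral_enorm]
  simp_rw [← Real.enorm_eq_ofReal_abs]

lemma lower_L1 (hφ : IsPhi φ) (hψ : IsPsi ψ) (u : ℝ → ℝ) :
    ENNReal.ofReal (ψ 1 * φ 1) * eLpNorm u 1 μ01 ≤ QANorm φ ψ u := by
  rw [QANorm]
  refine le_iInf fun g => le_iInf fun hadm => ?_
  obtain ⟨hmeas, hfin, hpos, hle⟩ := hadm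
  have hL1 : eLpNorm u 1 μ01 ≤ ∑' n, eLpNorm (g n) 1 μ01 := by
    have e2 : ∀ n, eLpNorm (g n) 1 μ01 = ∫⁻ x, ENNReal.ofReal (g n x) ∂μ01 := by
      intro n
      rw [eLpNorm_one_eq_lintegral_enorm]
      refine lintegral_congr fun x => ?_
      rw [← Real.enorm_eq_ofReal (hpos n x)]
    rw [eLpNorm_one_eq]
    calc ∫⁻ x, ENNReal.ofReal |u x| ∂μ01 ≤ ∫⁻ x, ∑' n, ENNReal.ofReal (g n x) ∂μ01 :=
          lintegral_mono_ae hle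
      _ = ∑' n, ∫⁻ x, ENNReal.ofReal (g n x) ∂μ01 :=
          lintegral_tsum fun n => (ENNReal.measurable_ofReal.comp_aemeasurable (hmeas n))
      _ = ∑' n, eLpNorm (g n) 1 μ01 := by simp_rw [e2]
  have key : ∀ n : ℕ, ENNReal.ofReal (ψ 1 * φ 1) * eLpNorm (g n) 1 μ01 ≤
      ENNReal.ofReal (ψ ((n:ℝ)+1) * (eLpNorm (g n) ⊤ μ01).toReal *
        φ ((eLpNorm (g n) 1 μ01 / eLpNorm (g n) ⊤ μ01).toReal)) := by
    intro n
    by_cases hA : eLpNorm (g n) ⊤ μ01 = 0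
    · have h0 : (fun x => g n x) =ᵐ[μ01] 0 :=
        (eLpNorm_eq_zero_iff (hmeas n).aestronglyMeasurable (by simp)).1 hA
      have : eLpNorm (g n) 1 μ01 = 0 :=
        (eLpNorm_eq_zero_iff (hmeas n).aestronglyMeasurable one_ne_zero).2 h0
      simp [this]
    · set A := eLpNorm (g n) ⊤ μ01 with hAdef
      set L := eLpNorm (g n) 1 μ01 with hLdef
      have hAtop : A ≠ ⊤ := (hfin n).ne
      have hLA : L ≤ A := eLpNorm_le_eLpNorm_of_exponent_le le_top (hmeas n).aestronglyMeasurable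
      have hLtop : L ≠ ⊤ := (lt_of_le_of_lt hLA (hfin n)).ne
      have ha : 0 < A.toReal := ENNReal.toReal_pos hA hAtop
      have hr : (L / A).toReal = L.toReal / A.toReal := ENNReal.toReal_div _ _
      have hr0 : 0 ≤ (L/A).toReal := ENNReal.toReal_nonneg
      have hr1 : (L/A).toReal ≤ 1 := by
        rw [hr]; exact div_le_one_of_le₀ (ENNReal.toReal_mono hAtop hLA) ha.le
      have hφr : (L/A).toReal * φ 1 ≤ φ ((L/A).toReal) := phi_lower hφ hr0 hr1
      have hψn : ψ 1 ≤ ψ ((n:ℝ)+1) := by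
        have h1n : (1:ℝ) ≤ (n:ℝ)+1 := by
          have := Nat.cast_nonneg (α := ℝ) n; linarith
        exact hψ.mono (mem_Ici.2 one_pos.le) (mem_Ici.2 (by linarith)) h1n
      have hφ1 : 0 ≤ φ 1 := (hφ.pos 1 one_pos le_rfl).le
      have hψ1 : 0 ≤ ψ 1 := psi_nonneg hψ one_pos.le
      have hφrpos : 0 ≤ φ ((L/A).toReal) := phi_nonneg hφ hr0 hr1
      have hreal : ψ 1 * φ 1 * L.toReal ≤ ψ ((n:ℝ)+1) * A.toReal * φ ((L/A).toReal) := by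
        have h1 : ψ 1 * φ 1 * L.toReal = ψ 1 * (A.toReal * ((L/A).toReal * φ 1)) := by
          rw [hr]; field_simp
        rw [h1]
        calc ψ 1 * (A.toReal * ((L/A).toReal * φ 1))
            ≤ ψ 1 * (A.toReal * φ ((L/A).toReal)) :=
              mul_le_mul_of_nonneg_left
                (mul_le_mul_of_nonneg_left hφr ha.le) hψ1
          _ ≤ ψ ((n:ℝ)+1) * (A.toReal * φ ((L/A).toReal)) :=
              mul_le_mul_of_nonneg_right hψn (by positivity)
          _ = ψ ((n:ℝ)+1) * A.toReal * φ ((L/A).toReal) := (mul_assoc _ _ _).symm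
      calc ENNReal.ofReal (ψ 1 * φ 1) * L
            = ENNReal.ofReal (ψ 1 * φ 1) * ENNReal.ofReal L.toReal := by
              rw [ENNReal.ofReal_toReal hLtop]
        _ = ENNReal.ofReal (ψ 1 * φ 1 * L.toReal) := (ENNReal.ofReal_mul (by positivity)).symm
        _ ≤ _ := ENNReal.ofReal_le_ofReal hreal
  calc ENNReal.ofReal (ψ 1 * φ 1) * eLpNorm u 1 μ01
      ≤ ENNReal.ofReal (ψ 1 * φ 1) * ∑' n, eLpNorm (g n) 1 μ01 := mul_le_mul_right hL1 _
    _ = ∑' n, ENNReal.ofReal (ψ 1 * φ 1) * eLpNorm (g n) 1 μ01 := ENNReal.tsum_mul_left.symm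
    _ ≤ seqCost φ ψ g := ENNReal.tsum_le_tsum key

end Helpers

section Combine

variable {φ ψ : ℝ → ℝ}

def enc (p : ℕ × ℕ) : ℕ := 2^p.1 * (2*p.2+1) - 1

lemma enc_pos (p : ℕ × ℕ) : 1 ≤ 2^p.1 * (2*p.2+1) :=
  Nat.one_le_iff_ne_zero.2 (by positivity)

lemma enc_add_one (p : ℕ × ℕ) : enc p + 1 = 2^p.1 * (2*p.2+1) := by
  have := enc_pos p; unfold enc; omega

lemma enc_inj : Function.Injective enc := by
  intro p q h
  have h' : 2^p.1*(2*p.2+1) = 2^q.1*(2*q.2+1) := by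
    have h1 := enc_add_one p; have h2 := enc_add_one q; omega
  obtain ⟨h1, h2⟩ := two_pow_odd_inj _ _ _ _ h'
  exact Prod.ext h1 h2

open scoped Classical in
def combineG (g : ℕ → ℕ → ℝ → ℝ) : ℕ → ℝ → ℝ := fun m =>
  if hm : ∃ p : ℕ × ℕ, enc p = m then g hm.choose.1 hm.choose.2 else fun _ => 0

lemma combineG_enc (g : ℕ → ℕ → ℝ → ℝ) (p : ℕ × ℕ) : combineG g (enc p) = g p.1 p.2 := by
  have hm : ∃ q : ℕ × ℕ, enc q = enc p := ⟨p, rfl⟩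
  have hc : hm.choose = p := enc_inj hm.choose_spec
  simp only [combineG, dif_pos hm, hc]


lemma combineG_not (g : ℕ → ℕ → ℝ → ℝ) (m : ℕ) (hm : ¬ ∃ p, enc p = m) :
    combineG g m = fun _ => 0 := by
  simp only [combineG]
  exact dif_neg hm

lemma combine (hφ : IsPhi φ) (hψ : IsPsi ψ) (h : ℝ → ℝ) (H : ℕ → ℝ → ℝ)
    (g : ℕ → ℕ → ℝ → ℝ) (hadm : ∀ k, Admissible (H k) (g k))
    (hle : ∀ᵐ x ∂μ01, ENNReal.ofReal |h x| ≤ ∑' k : ℕ, ENNReal.ofReal |H k x|) :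
    QANorm φ ψ h ≤ ∑' k : ℕ, 2^(k+1) * seqCost φ ψ (g k) := by
  have hadm' : Admissible h (combineG g) := by
    refine ⟨?_, ?_, ?_, ?_⟩
    · intro m
      by_cases hm : ∃ p, enc p = m
      · obtain ⟨p, rfl⟩ := hm; rw [combineG_enc]; exact (hadm p.1).1 p.2
      · rw [combineG_not g m hm]; exact aemeasurable_const
    · intro m
      by_cases hm : ∃ p, enc p = m
      · obtain ⟨p, rfl⟩ := hm; rw [combineG_enc]; exact (hadm p.1).2.1 p.2
      · rw [combineG_not g m hm]
        simp only [eLpNorm_zero']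
        exact ENNReal.zero_lt_top
    · intro m x
      by_cases hm : ∃ p, enc p = m
      · obtain ⟨p, rfl⟩ := hm; rw [combineG_enc]; exact (hadm p.1).2.2.1 p.2 x
      · rw [combineG_not g m hm]
    · have hk : ∀ᵐ x ∂μ01, ∀ k : ℕ,
          ENNReal.ofReal |H k x| ≤ ∑' n : ℕ, ENNReal.ofReal (g k n x) :=
        ae_all_iff.2 fun k => (hadm k).2.2.2
      filter_upwards [hle, hk] with x hx hkx
      calc ENNReal.ofReal |h x| ≤ ∑' k : ℕ, ENNReal.ofReal |H k x| := hx
        _ ≤ ∑' k : ℕ, ∑' n : ℕ, ENNReal.ofReal (g k n x) := ENNReal.tsum_le_tsum fun k => hkx k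
        _ = ∑' p : ℕ × ℕ, ENNReal.ofReal (g p.1 p.2 x) :=
            (ENNReal.tsum_prod' (f := fun p : ℕ × ℕ => ENNReal.ofReal (g p.1 p.2 x))).symm
        _ = ∑' p : ℕ × ℕ, ENNReal.ofReal (combineG g (enc p) x) := by
            refine tsum_congr fun p => ?_
            rw [combineG_enc]
        _ ≤ ∑' m : ℕ, ENNReal.ofReal (combineG g m x) :=
            ENNReal.tsum_comp_le_tsum_of_injective enc_inj _
  refine le_trans (iInf_le_of_le (combineG g) (iInf_le_of_le hadm' le_rfl)) ?_
  set t : ℕ → ℝ≥0∞ := fun m => ENNReal.ofReal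
    (ψ ((m : ℝ) + 1) * (eLpNorm (combineG g m) ⊤ μ01).toReal *
      φ ((eLpNorm (combineG g m) 1 μ01 / eLpNorm (combineG g m) ⊤ μ01).toReal)) with ht
  have hsupp : Function.support t ⊆ Set.range enc := by
    intro m hm
    by_contra hnot
    apply hm
    have hne : ¬ ∃ p, enc p = m := by
      intro ⟨p, hp⟩; exact hnot ⟨p, hp⟩
    have h0 : combineG g m = fun _ => 0 := combineG_not g m hne
    have hA : eLpNorm (combineG g m) ⊤ μ01 = 0 := by rw [h0]; exact eLpNorm_zero'
    show t m = 0
    simp only [ht]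
    rw [hA]
    simp
  have heq : seqCost φ ψ (combineG g) = ∑' p : ℕ × ℕ, t (enc p) :=
    (Function.Injective.tsum_eq enc_inj hsupp).symm
  rw [seqCost] at heq ⊢
  rw [heq, ENNReal.tsum_prod']
  refine ENNReal.tsum_le_tsum fun k => ?_
  rw [seqCost, ← ENNReal.tsum_mul_left]
  refine ENNReal.tsum_le_tsum fun n => ?_
  -- per-term bound
  have hGe : combineG g (enc (k, n)) = g k n := combineG_enc g (k, n)
  simp only [ht, hGe]
  set a := (eLpNorm (g k n) ⊤ μ01).toReal with hadef
  set b := φ ((eLpNorm (g k n) 1 μ01 / eLpNorm (g k n) ⊤ μ01).toReal) with hbdef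
  have ha : 0 ≤ a := ENNReal.toReal_nonneg
  have h2 : ((2:ℝ≥0∞))^(k+1) = ENNReal.ofReal ((2:ℝ)^(k+1)) := by
    rw [ENNReal.ofReal_pow (by norm_num)]
    norm_num
  by_cases hb : 0 ≤ b
  · have hcast : ((enc (k, n) : ℝ) + 1) = (2:ℝ)^k * (2*(n:ℝ)+1) := by
      have := enc_add_one (k, n)
      have : ((enc (k,n) + 1 : ℕ) : ℝ) = ((2^k * (2*n+1) : ℕ) : ℝ) := by rw [this]
      push_cast at this
      linarith
    have hψle : ψ ((enc (k, n) : ℝ) + 1) ≤ 2^(k+1) * ψ ((n:ℝ) + 1) := by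
      rw [hcast]
      have hmem1 : (2:ℝ)^k * (2*(n:ℝ)+1) ∈ Ici (0:ℝ) := by
        simp only [mem_Ici]; positivity
      have hle2 : (2:ℝ)^k * (2*(n:ℝ)+1) ≤ 2^(k+1) * ((n:ℝ)+1) := by
        rw [pow_succ]
        nlinarith [pow_pos (show (0:ℝ) < 2 by norm_num) k]
      calc ψ ((2:ℝ)^k * (2*(n:ℝ)+1)) ≤ ψ (2^(k+1) * ((n:ℝ)+1)) :=
            hψ.mono hmem1 (by simp only [mem_Ici]; positivity) hle2
        _ ≤ 2^(k+1) * ψ ((n:ℝ)+1) :=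
            psi_scale hψ (one_le_pow₀ (by norm_num)) (by positivity)
    have hreal : ψ ((enc (k, n) : ℝ) + 1) * a * b ≤ (2:ℝ)^(k+1) * (ψ ((n:ℝ)+1) * a * b) := by
      have hab : 0 ≤ a * b := mul_nonneg ha hb
      calc ψ ((enc (k, n) : ℝ) + 1) * a * b = ψ ((enc (k, n) : ℝ) + 1) * (a * b) := mul_assoc _ _ _
        _ ≤ (2^(k+1) * ψ ((n:ℝ)+1)) * (a * b) := mul_le_mul_of_nonneg_right hψle hab
        _ = (2:ℝ)^(k+1) * (ψ ((n:ℝ)+1) * a * b) := by ring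
    calc ENNReal.ofReal (ψ ((enc (k, n) : ℝ) + 1) * a * b)
        ≤ ENNReal.ofReal ((2:ℝ)^(k+1) * (ψ ((n:ℝ)+1) * a * b)) := ENNReal.ofReal_le_ofReal hreal
      _ = ENNReal.ofReal ((2:ℝ)^(k+1)) * ENNReal.ofReal (ψ ((n:ℝ)+1) * a * b) :=
          ENNReal.ofReal_mul (by positivity)
      _ = 2^(k+1) * ENNReal.ofReal (ψ ((n:ℝ)+1) * a * b) := by rw [h2]
  · push_neg at hb
    have hψ0 : 0 ≤ ψ ((enc (k, n) : ℝ) + 1) := psi_nonneg hψ (by positivity)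
    have : ψ ((enc (k, n) : ℝ) + 1) * a * b ≤ 0 :=
      mul_nonpos_iff.2 (Or.inl ⟨mul_nonneg hψ0 ha, hb.le⟩)
    rw [ENNReal.ofReal_eq_zero.2 this]
    exact zero_le

end Combine

section Key

variable {φ ψ : ℝ → ℝ}

lemma key_subadd (hφ : IsPhi φ) (hψ : IsPsi ψ) (h : ℝ → ℝ) (H : ℕ → ℝ → ℝ)
    (hle : ∀ᵐ x ∂μ01, ENNReal.ofReal |h x| ≤ ∑' k : ℕ, ENNReal.ofReal |H k x|) :
    QANorm φ ψ h ≤ ∑' k : ℕ, 2^(k+1) * QANorm φ ψ (H k) := by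
  by_cases htop : ∃ k, QANorm φ ψ (H k) = ⊤
  · obtain ⟨k, hk⟩ := htop
    refine le_trans le_top (le_trans ?_ (ENNReal.le_tsum k))
    rw [hk, ENNReal.mul_top (by positivity)]
  push_neg at htop
  refine ENNReal.le_of_forall_pos_le_add fun ε hε _ => ?_
  have hchoice : ∀ k : ℕ, ∃ gk : ℕ → ℝ → ℝ, Admissible (H k) gk ∧
      seqCost φ ψ gk ≤ QANorm φ ψ (H k) + (ε : ℝ≥0∞) * 2⁻¹^(k+1) * (2^(k+1))⁻¹ := by
    intro k
    set δ : ℝ≥0∞ := (ε : ℝ≥0∞) * 2⁻¹^(k+1) * (2^(k+1))⁻¹ with hδdef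
    have hδ : δ ≠ 0 := by
      refine mul_ne_zero (mul_ne_zero ?_ ?_) ?_
      · exact ENNReal.coe_ne_zero.2 hε.ne'
      · exact pow_ne_zero _ (ENNReal.inv_ne_zero.2 ENNReal.ofNat_ne_top)
      · exact ENNReal.inv_ne_zero.2 (ENNReal.pow_ne_top ENNReal.ofNat_ne_top)
    have hQlt : QANorm φ ψ (H k) < QANorm φ ψ (H k) + δ :=
      ENNReal.lt_add_right (htop k) hδ
    rw [QANorm] at hQlt
    obtain ⟨g, hg⟩ := iInf_lt_iff.1 hQlt
    obtain ⟨hadm, hcost⟩ := iInf_lt_iff.1 hg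
    exact ⟨g, hadm, hcost.le⟩
  choose g hgadm hgcost using hchoice
  calc QANorm φ ψ h ≤ ∑' k : ℕ, 2^(k+1) * seqCost φ ψ (g k) :=
        combine hφ hψ h H g hgadm hle
    _ ≤ ∑' k : ℕ, 2^(k+1) * (QANorm φ ψ (H k) + (ε:ℝ≥0∞) * 2⁻¹^(k+1) * (2^(k+1))⁻¹) :=
        ENNReal.tsum_le_tsum fun k => mul_le_mul_right (hgcost k) _
    _ = ∑' k : ℕ, (2^(k+1) * QANorm φ ψ (H k) + (ε:ℝ≥0∞) * 2⁻¹^(k+1)) := by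
        refine tsum_congr fun k => ?_
        rw [mul_add]
        congr 1
        rw [mul_comm ((2:ℝ≥0∞)^(k+1)) _, mul_assoc,
          ENNReal.inv_mul_cancel (pow_ne_zero _ (by norm_num))
            (ENNReal.pow_ne_top ENNReal.ofNat_ne_top), mul_one]
    _ = (∑' k : ℕ, 2^(k+1) * QANorm φ ψ (H k)) + ∑' k : ℕ, (ε:ℝ≥0∞) * 2⁻¹^(k+1) :=
        ENNReal.tsum_add
    _ ≤ (∑' k : ℕ, 2^(k+1) * QANorm φ ψ (H k)) + ε := by
        apply add_le_add_right
        rw [ENNReal.tsum_mul_left, ENNReal.tsum_geometric_add_one, ENNReal.one_sub_inv_two,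
          inv_inv,
          show (2⁻¹ : ℝ≥0∞) * 2 = 1 from ENNReal.inv_mul_cancel (by norm_num) ENNReal.ofNat_ne_top,
          mul_one]

end Key

section TwoTerm

variable {φ ψ : ℝ → ℝ}

lemma QANorm_zero_fn : QANorm φ ψ (fun _ => (0:ℝ)) = 0 := by
  apply le_antisymm _ zero_le
  have hadm : Admissible (fun _ => (0:ℝ)) (fun _ _ => 0) := by
    refine ⟨fun _ => aemeasurable_const, fun _ => ?_, fun _ _ => le_rfl, ?_⟩
    · simp only [eLpNorm_zero']; exact ENNReal.zero_lt_top
    · simp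
  refine le_trans (iInf_le_of_le (fun _ _ => 0) (iInf_le_of_le hadm le_rfl)) ?_
  rw [seqCost]
  have : ∀ n : ℕ, ENNReal.ofReal
      (ψ ((n : ℝ) + 1) * (eLpNorm (fun _ => (0:ℝ)) ⊤ μ01).toReal *
        φ ((eLpNorm (fun _ => (0:ℝ)) 1 μ01 / eLpNorm (fun _ => (0:ℝ)) ⊤ μ01).toReal)) = 0 := by
    intro n
    rw [eLpNorm_zero']
    simp
  simp only [this, tsum_zero, le_refl]

lemma tsum_two (v : ℕ → ℝ≥0∞) (hv : ∀ k, 2 ≤ k → v k = 0) : ∑' k, v k = v 0 + v 1 := by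
  rw [tsum_eq_sum (s := ({0, 1} : Finset ℕ)) (fun k hk => hv k (by simp at hk; omega))]
  rw [Finset.sum_pair (by norm_num)]

lemma two_term (hφ : IsPhi φ) (hψ : IsPsi ψ) (u a b : ℝ → ℝ)
    (hab : ∀ᵐ x ∂μ01, ENNReal.ofReal |u x| ≤ ENNReal.ofReal |a x| + ENNReal.ofReal |b x|) :
    QANorm φ ψ u ≤ 2 * QANorm φ ψ a + 4 * QANorm φ ψ b := by
  classical
  set H : ℕ → ℝ → ℝ := fun k => if k = 0 then a else if k = 1 then b else fun _ => 0 with hH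
  have hle : ∀ᵐ x ∂μ01, ENNReal.ofReal |u x| ≤ ∑' k : ℕ, ENNReal.ofReal |H k x| := by
    filter_upwards [hab] with x hx
    rw [tsum_two (fun k => ENNReal.ofReal |H k x|) (fun k hk => by
      have h0 : k ≠ 0 := by omega
      have h1 : k ≠ 1 := by omega
      simp [hH, h0, h1])]
    simpa [hH] using hx
  have hkey := key_subadd hφ hψ u H hle
  rw [tsum_two (fun k => 2^(k+1) * QANorm φ ψ (H k)) (fun k hk => by
      have h0 : k ≠ 0 := by omega
      have h1 : k ≠ 1 := by omega
      simp only [hH, h0, h1, if_false]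
      rw [QANorm_zero_fn, mul_zero])] at hkey
  simpa [hH, show ((2:ℝ≥0∞))^(1+1) = 4 by norm_num] using hkey

end TwoTerm

/-- completeness of `QA_{φ,ψ}`: every Cauchy sequence with respect to the
quasi-norm converges in the quasi-norm to some element of `QA_{φ,ψ}`. -/
theorem stmt5 {φ ψ : ℝ → ℝ} (hφ : IsPhi φ) (hψ : IsPsi ψ)
    (F : ℕ → ℝ → ℝ) (hF : ∀ n, MemQA φ ψ (F n))
    (hCauchy : ∀ ε : ℝ, 0 < ε → ∃ N : ℕ, ∀ m ≥ N, ∀ n ≥ N,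
      QANorm φ ψ (F m - F n) < ENNReal.ofReal ε) :
    ∃ f : ℝ → ℝ, MemQA φ ψ f ∧
      Tendsto (fun n => QANorm φ ψ (F n - f)) atTop (𝓝 0) := by
  classical
  have hN : ∀ k : ℕ, ∃ N : ℕ, ∀ m ≥ N, ∀ n ≥ N,
      QANorm φ ψ (F m - F n) < ENNReal.ofReal ((1/8:ℝ)^k) :=
    fun k => hCauchy ((1/8)^k) (by positivity)
  choose N hNs using hN
  set nseq : ℕ → ℕ := fun k => Nat.rec (N 0) (fun k nk => max (nk + 1) (N (k+1))) k with hnseq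
  have hstep : ∀ k, nseq k < nseq (k+1) :=
    fun k => lt_of_lt_of_le (Nat.lt_succ_self _) (le_max_left _ _)
  have hsm : StrictMono nseq := strictMono_nat_of_lt_succ hstep
  have hge : ∀ k, N k ≤ nseq k := by
    intro k
    cases k with
    | zero => exact le_rfl
    | succ k => exact le_max_right _ _
  set hd : ℕ → ℝ → ℝ := fun k => F (nseq (k+1)) - F (nseq k) with hhd
  have hQ : ∀ k, QANorm φ ψ (hd k) < ENNReal.ofReal ((1/8:ℝ)^k) :=
    fun k => hNs k _ (le_trans (hge k) (hstep k).le) _ (hge k)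
  have hdmeas : ∀ k, AEMeasurable (hd k) μ01 := fun k => ((hF _).1.sub (hF _).1)
  set c : ℝ := ψ 1 * φ 1 with hcdef
  have hc0 : 0 < c := mul_pos (hψ.pos 1 one_pos) (hφ.pos 1 one_pos le_rfl)
  have hcne : ENNReal.ofReal c ≠ 0 := by
    simp only [ne_eq, ENNReal.ofReal_eq_zero, not_le]
    exact hc0
  have hL1 : ∀ k, eLpNorm (hd k) 1 μ01 ≤ (ENNReal.ofReal c)⁻¹ * ENNReal.ofReal ((1/8:ℝ)^k) := by
    intro k
    have h2 : ENNReal.ofReal c * eLpNorm (hd k) 1 μ01 ≤ ENNReal.ofReal ((1/8:ℝ)^k) :=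
      le_trans (lower_L1 hφ hψ (hd k)) (hQ k).le
    calc eLpNorm (hd k) 1 μ01
        = (ENNReal.ofReal c)⁻¹ * (ENNReal.ofReal c * eLpNorm (hd k) 1 μ01) := by
          rw [← mul_assoc, ENNReal.inv_mul_cancel hcne ENNReal.ofReal_ne_top, one_mul]
      _ ≤ _ := mul_le_mul_right h2 _
  have hgeom : ∑' k : ℕ, ENNReal.ofReal ((1/8:ℝ)^k) < ⊤ := by
    have he : ∀ k:ℕ, ENNReal.ofReal ((1/8:ℝ)^k) = (ENNReal.ofReal (1/8))^k :=
      fun k => ENNReal.ofReal_pow (by norm_num) k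
    simp_rw [he, ENNReal.tsum_geometric]
    refine ENNReal.inv_lt_top.2 ?_
    rw [tsub_pos_iff_lt]
    exact ENNReal.ofReal_lt_one.2 (by norm_num)
  have htsum_meas : AEMeasurable (fun x => ∑' k : ℕ, ENNReal.ofReal |hd k x|) μ01 := by
    apply AEMeasurable.ennreal_tsum
    intro k
    simp_rw [← Real.enorm_eq_ofReal_abs]
    exact (hdmeas k).enorm
  have hint : ∫⁻ x, (∑' k : ℕ, ENNReal.ofReal |hd k x|) ∂μ01 ≠ ⊤ := by
    rw [lintegral_tsum (fun k => by
      simp_rw [← Real.enorm_eq_ofReal_abs]; exact (hdmeas k).enorm)]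
    have he2 : ∀ k, ∫⁻ x, ENNReal.ofReal |hd k x| ∂μ01 = eLpNorm (hd k) 1 μ01 :=
      fun k => (eLpNorm_one_eq (hd k)).symm
    simp_rw [he2]
    refine (lt_of_le_of_lt (ENNReal.tsum_le_tsum hL1) ?_).ne
    rw [ENNReal.tsum_mul_left]
    exact ENNReal.mul_lt_top (ENNReal.inv_lt_top.2 (ENNReal.ofReal_pos.2 hc0)) hgeom
  have haes : ∀ᵐ x ∂μ01, ∑' k : ℕ, ENNReal.ofReal |hd k x| < ⊤ := ae_lt_top' htsum_meas hint
  set f : ℝ → ℝ := fun x => F (nseq 0) x + ∑' k : ℕ, (F (nseq (k+1)) x - F (nseq k) x) with hfdef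
  have hgood : ∀ᵐ x ∂μ01,
      (∀ K : ℕ, ENNReal.ofReal |F (nseq K) x - f x| ≤ ∑' j : ℕ, ENNReal.ofReal |hd (j + K) x|)
      ∧ Tendsto (fun K => F (nseq K) x) atTop (𝓝 (f x)) := by
    filter_upwards [haes] with x hx
    have hxne : ∑' k : ℕ, ENNReal.ofReal |hd k x| ≠ ⊤ := hx.ne
    have hsumm : Summable (fun k => hd k x) := by
      apply Summable.of_nnnorm
      apply ENNReal.tsum_coe_ne_top_iff_summable.1
      simpa [← enorm_eq_nnnorm, Real.enorm_eq_ofReal_abs] using hxne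
    have htel : ∀ K, ∑ k ∈ Finset.range K, hd k x = F (nseq K) x - F (nseq 0) x :=
      fun K => Finset.sum_range_sub (fun k => F (nseq k) x) K
    have hfx : f x = F (nseq 0) x + ∑' k : ℕ, hd k x := rfl
    have hKeq : ∀ K, f x - F (nseq K) x = ∑' j : ℕ, hd (j + K) x := by
      intro K
      have h1 := Summable.sum_add_tsum_nat_add (f := fun k => hd k x) K hsumm
      rw [hfx, ← h1, htel K]
      ring
    constructor
    · intro K
      have habs : |F (nseq K) x - f x| = |∑' j : ℕ, hd (j + K) x| := by
        rw [abs_sub_comm, hKeq K]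
      rw [habs]
      have hsumm' : Summable (fun j => hd (j + K) x) := (summable_nat_add_iff K).2 hsumm
      have hsummabs : Summable (fun j => |hd (j + K) x|) := hsumm'.abs
      calc ENNReal.ofReal |∑' j : ℕ, hd (j + K) x|
          ≤ ENNReal.ofReal (∑' j : ℕ, |hd (j + K) x|) := by
            apply ENNReal.ofReal_le_ofReal
            calc |∑' j : ℕ, hd (j+K) x| = ‖∑' j : ℕ, hd (j+K) x‖ := (Real.norm_eq_abs _).symm
              _ ≤ ∑' j : ℕ, ‖hd (j+K) x‖ :=
                  norm_tsum_le_tsum_norm (by simpa [Real.norm_eq_abs] using hsummabs)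
              _ = ∑' j : ℕ, |hd (j+K) x| := by simp [Real.norm_eq_abs]
        _ = ∑' j : ℕ, ENNReal.ofReal |hd (j + K) x| :=
            ENNReal.ofReal_tsum_of_nonneg (fun j => abs_nonneg _) hsummabs
    · have h2 : Tendsto (fun K => ∑ k ∈ Finset.range K, hd k x) atTop (𝓝 (∑' k : ℕ, hd k x)) :=
        hsumm.hasSum.tendsto_sum_nat
      have h3 : Tendsto (fun K => F (nseq 0) x + ∑ k ∈ Finset.range K, hd k x) atTop
          (𝓝 (F (nseq 0) x + ∑' k : ℕ, hd k x)) := tendsto_const_nhds.add h2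
      rw [← hfx] at h3
      refine h3.congr fun K => ?_
      rw [htel K]; ring
  have hfmeas : AEMeasurable f μ01 :=
    aemeasurable_of_tendsto_metrizable_ae atTop (fun K => (hF (nseq K)).1)
      (hgood.mono fun x hx => hx.2)
  set C : ℝ≥0∞ := ∑' j : ℕ, 2^(j+1) * ENNReal.ofReal ((1/8:ℝ)^j) with hCdef
  have hCtop : C < ⊤ := by
    have hterm : ∀ j:ℕ, (2:ℝ≥0∞)^(j+1) * ENNReal.ofReal ((1/8:ℝ)^j)
        = 2 * (ENNReal.ofReal (1/4))^j := by
      intro j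
      rw [pow_succ', mul_assoc, ENNReal.ofReal_pow (by norm_num : (0:ℝ) ≤ 1/8) j, ← mul_pow]
      congr 2
      rw [show (2:ℝ≥0∞) = ENNReal.ofReal 2 from (ENNReal.ofReal_ofNat 2).symm,
        ← ENNReal.ofReal_mul (by norm_num)]
      norm_num
    rw [hCdef]
    simp_rw [hterm]
    rw [ENNReal.tsum_mul_left, ENNReal.tsum_geometric]
    refine ENNReal.mul_lt_top (by norm_num) (ENNReal.inv_lt_top.2 ?_)
    rw [tsub_pos_iff_lt]
    exact ENNReal.ofReal_lt_one.2 (by norm_num)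
  have hQK : ∀ K : ℕ, QANorm φ ψ (F (nseq K) - f) ≤ (ENNReal.ofReal (1/8))^K * C := by
    intro K
    have happ := key_subadd hφ hψ (F (nseq K) - f) (fun j => hd (j + K)) ?_
    · refine le_trans happ ?_
      calc ∑' j:ℕ, 2^(j+1) * QANorm φ ψ (hd (j + K))
          ≤ ∑' j:ℕ, 2^(j+1) * ENNReal.ofReal ((1/8:ℝ)^(j + K)) :=
            ENNReal.tsum_le_tsum fun j => mul_le_mul_right (hQ (j + K)).le _
        _ = ∑' j:ℕ, (ENNReal.ofReal (1/8))^K * (2^(j+1) * ENNReal.ofReal ((1/8:ℝ)^j)) := by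
            refine tsum_congr fun j => ?_
            rw [show ((1/8:ℝ))^(j+K) = (1/8)^j * (1/8)^K from pow_add _ j K,
              ENNReal.ofReal_mul (by positivity), ENNReal.ofReal_pow (by norm_num : (0:ℝ) ≤ 1/8) K]
            ring
        _ = (ENNReal.ofReal (1/8))^K * C := by rw [ENNReal.tsum_mul_left]
    · filter_upwards [hgood] with x hx
      simpa [Pi.sub_apply] using hx.1 K
  have htendK : Tendsto (fun K => QANorm φ ψ (F (nseq K) - f)) atTop (𝓝 0) := by
    have h8 : Tendsto (fun K:ℕ => (ENNReal.ofReal (1/8))^K * C) atTop (𝓝 0) := by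
      have hb := ENNReal.tendsto_pow_atTop_nhds_zero_of_lt_one
        (ENNReal.ofReal_lt_one.2 (by norm_num : (1/8:ℝ) < 1))
      have := ENNReal.Tendsto.mul_const hb (Or.inr hCtop.ne)
      simpa using this
    exact tendsto_of_tendsto_of_tendsto_of_le_of_le tendsto_const_nhds h8 (fun K => zero_le) hQK
  have hQf0 : QANorm φ ψ (F (nseq 0) - f) < ⊤ :=
    lt_of_le_of_lt (hQK 0) (by simpa using hCtop)
  have hMem : MemQA φ ψ f := by
    refine ⟨hfmeas, ?_⟩
    have h2t := two_term hφ hψ f (F (nseq 0)) (F (nseq 0) - f) ?_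
    · refine lt_of_le_of_lt h2t ?_
      exact ENNReal.add_lt_top.2 ⟨ENNReal.mul_lt_top (by norm_num) (hF _).2,
        ENNReal.mul_lt_top (by norm_num) hQf0⟩
    · refine Filter.Eventually.of_forall fun x => ?_
      rw [← ENNReal.ofReal_add (abs_nonneg _) (abs_nonneg _)]
      apply ENNReal.ofReal_le_ofReal
      simp only [Pi.sub_apply]
      calc |f x| = |F (nseq 0) x + -(F (nseq 0) x - f x)| := by
            rw [show F (nseq 0) x + -(F (nseq 0) x - f x) = f x by ring]
        _ ≤ |F (nseq 0) x| + |-(F (nseq 0) x - f x)| := abs_add_le _ _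
        _ = |F (nseq 0) x| + |F (nseq 0) x - f x| := by rw [abs_neg]
  refine ⟨f, hMem, ?_⟩
  rw [ENNReal.tendsto_atTop_zero]
  intro ε hε
  obtain ⟨r, hr0, hrε⟩ : ∃ r : ℝ, 0 < r ∧ ENNReal.ofReal r ≤ ε := by
    rcases eq_or_ne ε ⊤ with h | h
    · exact ⟨1, one_pos, by simp [h]⟩
    · exact ⟨ε.toReal, ENNReal.toReal_pos hε.ne' h, by rw [ENNReal.ofReal_toReal h]⟩
  obtain ⟨N₁, hN₁⟩ := hCauchy (r/16) (by positivity)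
  have hev := htendK.eventually_lt_const
    (show (0:ℝ≥0∞) < ENNReal.ofReal (r/8) from ENNReal.ofReal_pos.2 (by positivity))
  obtain ⟨K0, hK0⟩ := eventually_atTop.1 hev
  set K := max K0 N₁ with hK
  have hKK : QANorm φ ψ (F (nseq K) - f) < ENNReal.ofReal (r/8) := hK0 _ (le_max_left _ _)
  have hnK : N₁ ≤ nseq K := le_trans (le_max_right K0 N₁) hsm.le_apply
  refine ⟨N₁, fun m hm => ?_⟩
  have h2t := two_term hφ hψ (F m - f) (F m - F (nseq K)) (F (nseq K) - f) ?_
  · calc QANorm φ ψ (F m - f)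
        ≤ 2 * QANorm φ ψ (F m - F (nseq K)) + 4 * QANorm φ ψ (F (nseq K) - f) := h2t
      _ ≤ 2 * ENNReal.ofReal (r/16) + 4 * ENNReal.ofReal (r/8) := by
          exact add_le_add (mul_le_mul_right (hN₁ m hm (nseq K) hnK).le 2)
            (mul_le_mul_right hKK.le 4)
      _ ≤ ENNReal.ofReal r := by
          rw [show (2:ℝ≥0∞) = ENNReal.ofReal 2 from (ENNReal.ofReal_ofNat 2).symm,
            show (4:ℝ≥0∞) = ENNReal.ofReal 4 from (ENNReal.ofReal_ofNat 4).symm,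
            ← ENNReal.ofReal_mul (by norm_num), ← ENNReal.ofReal_mul (by norm_num),
            ← ENNReal.ofReal_add (by positivity) (by positivity)]
          exact ENNReal.ofReal_le_ofReal (by linarith)
      _ ≤ ε := hrε
  · refine Filter.Eventually.of_forall fun x => ?_
    rw [← ENNReal.ofReal_add (abs_nonneg _) (abs_nonneg _)]
    apply ENNReal.ofReal_le_ofReal
    simp only [Pi.sub_apply]
    calc |F m x - f x| = |(F m x - F (nseq K) x) + (F (nseq K) x - f x)| := by
          rw [show F m x - f x = (F m x - F (nseq K) x) + (F (nseq K) x - f x) by ring]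
      _ ≤ _ := abs_add_le _ _
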